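/- For every real α with |α| ≤ 1 and every real ξ > 0, the series ∑_{n=1}^∞ n C_n^0(α) I_n(ξ) converges absolutely and e^{α ξ} = I_0(ξ) + ∑_{n=1}^∞ n C_n^0(α) I_n(ξ). -/

import Mathlib

/-- For real `μ ≥ 0` and `ξ > 0`, the modified Bessel function of the first kind,
defined by the series `I_μ(ξ) = ∑_{m=0}^∞ (ξ/2)^(μ+2m) / (Γ(m+1) Γ(m+μ+1))`. -/
noncomputable def besselI (μ : ℝ) (ξ : ℝ) : ℝ :=
  ∑' m : ℕ, (ξ / 2) ^ (μ + 2 * (m : ℝ)) /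
    (Real.Gamma ((m : ℝ) + 1) * Real.Gamma ((m : ℝ) + μ + 1))

/-- The degenerate Gegenbauer polynomial: `C_0^0(x) = 1` and, for `n ≥ 1`,
`C_n^0(x) = ∑_{m=0}^{⌊n/2⌋} (−1)^m Γ(n−m) (2x)^(n−2m) / (Γ(m+1) Γ(n−2m+1))`. -/
noncomputable def gegenbauerC0 (n : ℕ) (x : ℝ) : ℝ :=
  if n = 0 then 1 else
    ∑ m ∈ Finset.range (n / 2 + 1),
      (-1 : ℝ) ^ m * Real.Gamma ((n : ℝ) - m) * (2 * x) ^ (n - 2 * m) /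
        (Real.Gamma ((m : ℝ) + 1) * Real.Gamma ((n : ℝ) - 2 * m + 1))

/-- Auxiliary coefficient: `cc n m = (-1)^m n (n-m-1)! / (m! (n-2m)!)` when `2m ≤ n`, else 0. -/
noncomputable def ccAux (n m : ℕ) : ℝ :=
  if 2 * m ≤ n then
    (-1 : ℝ) ^ m * n * (n - m - 1).factorial / (m.factorial * (n - 2 * m).factorial)
  else 0

/-- The doubled Chebyshev polynomial `2 T_n`, as an explicit sum, for `n ≥ 1`. -/
noncomputable def tcheb (n : ℕ) (x : ℝ) : ℝ :=
  ∑ m ∈ Finset.range (n / 2 + 1), ccAux n m * (2 * x) ^ (n - 2 * m)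

lemma tcheb_eq_big (n : ℕ) (N : ℕ) (hN : n / 2 + 1 ≤ N) (x : ℝ) :
    tcheb n x = ∑ m ∈ Finset.range N, ccAux n m * (2 * x) ^ (n - 2 * m) := by
  unfold tcheb
  apply Finset.sum_subset (Finset.range_subset_range.2 hN)
  intro m _ hm
  have : ¬ (2 * m ≤ n) := by
    simp only [Finset.mem_range, not_lt] at hm; omega
  simp [ccAux, this]


lemma fact_ne (k : ℕ) : ((k.factorial : ℝ)) ≠ 0 :=
  Nat.cast_ne_zero.mpr (Nat.factorial_ne_zero k)

lemma fact_cast_succ (k : ℕ) : (((k+1).factorial : ℕ) : ℝ) = ((k : ℝ) + 1) * (k.factorial : ℝ) := by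
  rw [Nat.factorial_succ]; push_cast; ring

lemma ccAux_val (n m : ℕ) (h : 2*m ≤ n) (a b : ℕ) (ha : n - m - 1 = a) (hb : n - 2*m = b) :
    ccAux n m = (-1:ℝ)^m * n * a.factorial / (m.factorial * b.factorial) := by
  unfold ccAux; rw [if_pos h, ha, hb]

lemma ccAux_zero_big (n m : ℕ) (h : n < 2*m) : ccAux n m = 0 := by
  unfold ccAux; rw [if_neg (by omega)]

lemma ccAux_key (n m : ℕ) (hn : 1 ≤ n) (y : ℝ) :
    ccAux (n+2) m * y ^ (n + 2 - 2*m)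
      = ccAux (n+1) m * y ^ (n + 1 - 2*m) * y
        - (if m = 0 then 0 else ccAux n (m-1) * y ^ (n + 2 - 2*m)) := by
  by_cases hm0 : m = 0
  · subst hm0
    rw [if_pos rfl, sub_zero,
      ccAux_val (n+2) 0 (by omega) (n+1) ((n+1)+1) (by omega) (by omega),
      ccAux_val (n+1) 0 (by omega) n (n+1) (by omega) (by omega),
      show n + 2 - 2*0 = (n + 1 - 2*0) + 1 from by omega, pow_succ,
      fact_cast_succ (n+1), show (n+1).factorial = ((n)+1).factorial from rfl,
      fact_cast_succ n]
    have h0 := fact_ne 0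
    have h1 := fact_ne n
    field_simp
    push_cast
    ring
  · obtain ⟨s, rfl⟩ : ∃ s, m = s + 1 := ⟨m - 1, by omega⟩
    rw [if_neg hm0]
    simp only [Nat.add_sub_cancel]
    rcases le_or_gt (2*(s+1)) n with hc | hc
    · -- main case : 2m ≤ n, write n = 2s+2+r
      obtain ⟨r, rfl⟩ : ∃ r, n = 2*s + 2 + r := ⟨n - (2*s+2), by omega⟩
      rw [ccAux_val (2*s+2+r+2) (s+1) (by omega) ((s+r+1)+1) ((r+1)+1) (by omega) (by omega),
        ccAux_val (2*s+2+r+1) (s+1) (by omega) (s+r+1) (r+1) (by omega) (by omega),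
        ccAux_val (2*s+2+r) s (by omega) (s+r+1) ((r+1)+1) (by omega) (by omega),
        show 2*s+2+r+2 - 2*(s+1) = (r+1)+1 from by omega,
        show 2*s+2+r+1 - 2*(s+1) = r+1 from by omega,
        fact_cast_succ (s+r+1), fact_cast_succ (r+1), fact_cast_succ s, pow_succ]
      have h1 := fact_ne s
      have h2 := fact_ne (r+1)
      have h3 := fact_ne (s+r+1)
      field_simp
      push_cast
      ring
    · rcases eq_or_lt_of_le (show n ≤ 2*s+1 from by omega) with hc1 | hc1
      · -- n = 2s+1 (so 2m = n+1)
        obtain rfl : n = 2*s+1 := hc1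
        rw [ccAux_val (2*s+1+2) (s+1) (by omega) (s+1) 1 (by omega) (by omega),
          ccAux_val (2*s+1+1) (s+1) (by omega) s 0 (by omega) (by omega),
          ccAux_val (2*s+1) s (by omega) s 1 (by omega) (by omega),
          show 2*s+1+2 - 2*(s+1) = 1 from by omega,
          show 2*s+1+1 - 2*(s+1) = 0 from by omega,
          fact_cast_succ s]
        have h1 := fact_ne s
        simp only [Nat.factorial_zero, Nat.factorial_one, Nat.cast_one, pow_one, pow_zero]
        field_simp
        push_cast
        ring
      · rcases eq_or_lt_of_le (show n ≤ 2*s from by omega) with hc2 | hc2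
        · -- n = 2s (so 2m = n+2); here s ≥ 1 since n ≥ 1
          obtain rfl : n = 2*s := hc2
          obtain ⟨t, rfl⟩ : ∃ t, s = t + 1 := ⟨s - 1, by omega⟩
          rw [ccAux_val (2*(t+1)+2) (t+2) (by omega) (t+1) 0 (by omega) (by omega),
            ccAux_zero_big (2*(t+1)+1) (t+2) (by omega),
            ccAux_val (2*(t+1)) (t+1) (by omega) t 0 (by omega) (by omega),
            show 2*(t+1)+2 - 2*(t+2) = 0 from by omega,
            show (t+2).factorial = ((t+1)+1).factorial from rfl,
            fact_cast_succ (t+1), fact_cast_succ t,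
            show t + 2 = (t+1) + 1 from by omega]
          have h1 := fact_ne t
          have h2 := fact_ne (t+1)
          simp only [Nat.factorial_zero, Nat.cast_one, pow_zero]
          field_simp
          push_cast
          ring
        · -- 2m > n+2 : everything vanishes
          rw [ccAux_zero_big (n+2) (s+1) (by omega),
            ccAux_zero_big (n+1) (s+1) (by omega),
            ccAux_zero_big n s (by omega)]
          ring

lemma tcheb_rec (n : ℕ) (hn : 1 ≤ n) (x : ℝ) :
    tcheb (n+2) x = 2 * x * tcheb (n+1) x - tcheb n x := by
  have h2 : tcheb (n+2) x = ∑ m ∈ Finset.range ((n+2)/2 + 1),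
      ccAux (n+2) m * (2*x) ^ (n + 2 - 2*m) := rfl
  have h1 : 2 * x * tcheb (n+1) x = ∑ m ∈ Finset.range ((n+2)/2 + 1),
      ccAux (n+1) m * (2*x) ^ (n + 1 - 2*m) * (2*x) := by
    rw [tcheb_eq_big (n+1) ((n+2)/2 + 1) (by omega), Finset.mul_sum]
    exact Finset.sum_congr rfl fun m _ => by ring
  have h0 : tcheb n x = ∑ m ∈ Finset.range ((n+2)/2 + 1),
      (if m = 0 then 0 else ccAux n (m-1) * (2*x) ^ (n + 2 - 2*m)) := by
    rw [Finset.sum_range_succ' (fun m => (if m = 0 then (0:ℝ) else ccAux n (m-1) * (2*x) ^ (n + 2 - 2*m) : ℝ)) ((n+2)/2)]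
    simp only [Nat.add_sub_cancel, Nat.succ_ne_zero, if_false, eq_self_iff_true, if_true,
      add_zero, reduceIte]
    rw [tcheb_eq_big n ((n+2)/2) (by omega) x]
    apply Finset.sum_congr rfl
    intro m _
    have he : n + 2 - 2*(m+1) = n - 2*m := by omega
    rw [he]
  rw [h2, h1, h0, ← Finset.sum_sub_distrib]
  exact Finset.sum_congr rfl fun m _ => ccAux_key n m hn (2*x)


lemma tcheb_one (x : ℝ) : tcheb 1 x = 2 * x := by
  unfold tcheb ccAux
  norm_num [Finset.sum_range_one, Nat.factorial]

lemma tcheb_two (x : ℝ) : tcheb 2 x = 2 * (2 * x^2 - 1) := by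
  unfold tcheb ccAux
  rw [show (2:ℕ)/2 + 1 = 2 from rfl, Finset.sum_range_succ, Finset.sum_range_one]
  norm_num [Nat.factorial]
  ring

lemma tcheb_cos : ∀ (n : ℕ) (θ : ℝ), tcheb (n+1) (Real.cos θ) = 2 * Real.cos ((n+1) * θ) := by
  intro n
  induction n using Nat.strong_induction_on with
  | _ n ih =>
    intro θ
    match n with
    | 0 => simpa using tcheb_one (Real.cos θ)
    | 1 =>
      rw [tcheb_two]
      have h2 := Real.cos_two_mul θ
      push_cast
      rw [show ((1:ℝ)+1)*θ = 2*θ from by ring, h2]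
    | (k+2) =>
      have hrec := tcheb_rec (k+1) (by omega) (Real.cos θ)
      have h1 := ih (k+1) (by omega) θ
      have h0 := ih k (by omega) θ
      have hck : ((k:ℝ)+2+1) * θ = ((k+1+1) * θ) + θ := by ring
      have hck2 : ((k:ℝ)+1) * θ = ((k+1+1) * θ) - θ := by ring
      have hcos : Real.cos ((k+2+1 : ℕ) * θ) + Real.cos ((k+1 : ℕ) * θ)
          = 2 * Real.cos ((k+1+1 : ℕ) * θ) * Real.cos θ := by
        push_cast
        rw [hck, hck2, Real.cos_add, Real.cos_sub]
        ring
      have : tcheb (k+1+2) (Real.cos θ) = 2 * Real.cos θ * tcheb (k+1+1) (Real.cos θ)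
          - tcheb (k+1) (Real.cos θ) := hrec
      rw [show k+2+1 = k+1+2 from by omega, this, h1, h0]
      push_cast at hcos ⊢
      linarith [hcos]

lemma mul_gegenbauerC0_eq_tcheb (n : ℕ) (x : ℝ) :
    ((n+1 : ℕ) : ℝ) * gegenbauerC0 (n+1) x = tcheb (n+1) x := by
  unfold gegenbauerC0 tcheb
  rw [if_neg (Nat.succ_ne_zero n), Finset.mul_sum]
  refine Finset.sum_congr rfl fun m hm => ?_
  have hm' : 2 * m ≤ n + 1 := by
    have := Finset.mem_range.mp hm; omega
  have hg1 : Real.Gamma ((n+1 : ℕ) - (m:ℝ)) = (n - m).factorial := by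
    rw [show ((n+1 : ℕ):ℝ) - (m:ℝ) = ((n - m : ℕ) : ℝ) + 1 from ?_, Real.Gamma_nat_eq_factorial]
    push_cast [Nat.cast_sub (show m ≤ n from by omega)]
    ring
  have hg2 : Real.Gamma ((m:ℝ) + 1) = m.factorial := by
    exact_mod_cast Real.Gamma_nat_eq_factorial m
  have hg3 : Real.Gamma (((n+1:ℕ)) - 2*(m:ℝ) + 1) = (n + 1 - 2*m).factorial := by
    rw [show ((n+1:ℕ):ℝ) - 2*(m:ℝ) + 1 = ((n + 1 - 2*m : ℕ) : ℝ) + 1 from ?_,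
      Real.Gamma_nat_eq_factorial]
    push_cast [Nat.cast_sub hm']
    ring
  rw [hg1, hg2, hg3, ccAux_val (n+1) m hm' (n - m) (n+1-2*m) (by omega) rfl]
  ring

lemma besselI_nat_eq (n : ℕ) (ξ : ℝ) :
    besselI (n : ℝ) ξ
      = ∑' m : ℕ, (ξ/2) ^ (n + 2*m) / ((m.factorial : ℝ) * ((m+n).factorial : ℝ)) := by
  unfold besselI
  refine tsum_congr fun m => ?_
  rw [show (n:ℝ) + 2*(m:ℝ) = ((n + 2*m : ℕ) : ℝ) from by push_cast; ring,
    Real.rpow_natCast,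
    show (m:ℝ) + 1 = ((m:ℕ):ℝ) + 1 from rfl, Real.Gamma_nat_eq_factorial,
    show (m:ℝ) + (n:ℝ) + 1 = ((m + n : ℕ):ℝ) + 1 from by push_cast; ring,
    Real.Gamma_nat_eq_factorial]

lemma besselI_nat_nonneg (n : ℕ) (ξ : ℝ) (hξ : 0 ≤ ξ) : 0 ≤ besselI (n : ℝ) ξ := by
  rw [besselI_nat_eq]
  refine tsum_nonneg fun m => ?_
  have h1 : (0:ℝ) ≤ (ξ/2) ^ (n + 2*m) := pow_nonneg (by linarith) _
  positivity

/-- The regrouping equivalence `ℤ × ℕ ≃ ℕ × ℕ`, `(n, q) ↦ (q + n⁺, q + n⁻)`. -/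
def intNatEquiv : ℤ × ℕ ≃ ℕ × ℕ where
  toFun s := (s.2 + s.1.toNat, s.2 + (-s.1).toNat)
  invFun p := ((p.1 : ℤ) - (p.2 : ℤ), min p.1 p.2)
  left_inv := by
    rintro ⟨n, q⟩
    ext
    · show ((q + n.toNat : ℕ) : ℤ) - ((q + (-n).toNat : ℕ) : ℤ) = n
      push_cast; omega
    · show min (q + n.toNat) (q + (-n).toNat) = q
      omega
  right_inv := by
    rintro ⟨p, q⟩
    ext
    · show min p q + ((p:ℤ) - (q:ℤ)).toNat = p
      omega
    · show min p q + (-((p:ℤ) - (q:ℤ))).toNat = q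
      omega

lemma term_calc (c z w : ℂ) (hzw : z * w = 1) (b k : ℕ) :
    (c * z) ^ (b + k) / (((b+k).factorial : ℕ) : ℂ) * ((c * w) ^ b / ((b.factorial : ℕ) : ℂ))
      = c ^ (k + 2*b) / (((b.factorial : ℕ) : ℂ) * (((b+k).factorial : ℕ) : ℂ)) * z ^ k := by
  have hz : z ^ (b+k) * w ^ b = z ^ k := by
    rw [pow_add, mul_comm (z^b) (z^k), mul_assoc, ← mul_pow, hzw, one_pow, mul_one]
  have h1 : (c*z) ^ (b+k) / (((b+k).factorial : ℕ) : ℂ) * ((c*w) ^ b / ((b.factorial : ℕ) : ℂ))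
      = (z ^ (b+k) * w ^ b) * (c ^ ((b+k)+b))
        / (((b.factorial : ℕ) : ℂ) * (((b+k).factorial : ℕ) : ℂ)) := by
    rw [mul_pow, mul_pow, pow_add c]
    ring
  rw [h1, hz, show (b+k)+b = k + 2*b from by omega]
  ring

set_option maxHeartbeats 2000000 in
lemma exp_cos_eq (ξ θ : ℝ) (hξ : 0 < ξ) :
    Summable (fun n : ℕ => besselI ((n+1 : ℕ) : ℝ) ξ) ∧
    Real.exp (Real.cos θ * ξ) = besselI 0 ξ +
      ∑' n : ℕ, 2 * Real.cos (((n:ℝ)+1) * θ) * besselI ((n+1 : ℕ) : ℝ) ξ := by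
  classical
  let z : ℂ := Complex.exp (θ * Complex.I)
  let w : ℂ := Complex.exp (-(θ * Complex.I))
  have hzw : z * w = 1 := by
    rw [← Complex.exp_add, add_neg_cancel, Complex.exp_zero]
  let u : ℕ → ℂ := fun p => (((ξ:ℂ)/2) * z) ^ p / (p.factorial : ℂ)
  let v : ℕ → ℂ := fun q => (((ξ:ℂ)/2) * w) ^ q / (q.factorial : ℂ)
  have hnorm : ∀ (x : ℂ), Summable fun p : ℕ => ‖x ^ p / (p.factorial : ℂ)‖ := by
    intro x
    refine (Real.summable_pow_div_factorial ‖x‖).congr fun p => ?_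
    rw [norm_div, norm_pow, Complex.norm_natCast]
  have hu : Summable fun p => ‖u p‖ := hnorm _
  have hv : Summable fun q => ‖v q‖ := hnorm _
  let F : ℕ × ℕ → ℂ := fun pq => u pq.1 * v pq.2
  have hF : Summable F := summable_mul_of_summable_norm hu hv
  have hexp : ∀ (x : ℂ), ∑' p : ℕ, x ^ p / (p.factorial : ℂ) = Complex.exp x := by
    intro x
    rw [Complex.exp_eq_exp_ℂ, NormedSpace.exp_eq_tsum_div]
  have htF : ∑' pq, F pq = Complex.exp ((Real.cos θ * ξ : ℝ) : ℂ) := by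
    rw [← tsum_mul_tsum_of_summable_norm hu hv, hexp, hexp, ← Complex.exp_add]
    congr 1
    have hc : ((Real.cos θ : ℝ) : ℂ) = Complex.cos (θ : ℂ) := Complex.ofReal_cos θ
    rw [Complex.ofReal_mul, hc, Complex.cos]
    show ((ξ:ℂ)/2) * z + ((ξ:ℂ)/2) * w = _
    unfold z w
    push_cast
    ring
  -- the two kinds of fibers
  have hfibPos : ∀ k : ℕ, (∑' q : ℕ, F (intNatEquiv ((k : ℤ), q)))
      = ((besselI (k : ℝ) ξ : ℝ) : ℂ) * z ^ k := by
    intro k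
    have hterm : ∀ q : ℕ, F (intNatEquiv ((k : ℤ), q))
        = (((ξ/2) ^ (k + 2*q) / ((q.factorial : ℝ) * ((q+k).factorial : ℝ)) : ℝ) : ℂ) * z ^ k := by
      intro q
      have he : intNatEquiv ((k : ℤ), q) = (q + k, q) := by
        show ((q + ((k:ℤ)).toNat, q + (-(k:ℤ)).toNat) : ℕ × ℕ) = (q + k, q)
        ext <;> simp <;> omega
      rw [he]
      show u (q + k) * v q = _
      rw [term_calc ((ξ:ℂ)/2) z w hzw q k]
      push_cast
      ring
    rw [tsum_congr hterm, tsum_mul_right, ← Complex.ofReal_tsum, ← besselI_nat_eq k ξ]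
  have hfibNeg : ∀ k : ℕ, (∑' q : ℕ, F (intNatEquiv (-((k:ℤ)+1), q)))
      = ((besselI ((k+1 : ℕ) : ℝ) ξ : ℝ) : ℂ) * w ^ (k+1) := by
    intro k
    have hterm : ∀ q : ℕ, F (intNatEquiv (-((k:ℤ)+1), q))
        = (((ξ/2) ^ ((k+1) + 2*q) / ((q.factorial : ℝ) * ((q+(k+1)).factorial : ℝ)) : ℝ) : ℂ)
          * w ^ (k+1) := by
      intro q
      have he : intNatEquiv (-((k:ℤ)+1), q) = (q, q + (k+1)) := by
        show ((q + (-((k:ℤ)+1)).toNat, q + (-(-((k:ℤ)+1))).toNat) : ℕ × ℕ) = (q, q + (k+1))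
        ext <;> simp <;> omega
      rw [he]
      show u q * v (q + (k+1)) = _
      rw [mul_comm (u q) (v (q + (k+1)))]
      rw [term_calc ((ξ:ℂ)/2) w z (by rw [mul_comm]; exact hzw) q (k+1)]
      push_cast
      ring
    rw [tsum_congr hterm, tsum_mul_right, ← Complex.ofReal_tsum, ← besselI_nat_eq (k+1) ξ]
  -- regroup
  have hG : Summable (fun s : ℤ × ℕ => F (intNatEquiv s)) := intNatEquiv.summable_iff.mpr hF
  have hc : Summable (fun n : ℤ => ∑' q : ℕ, F (intNatEquiv (n, q))) := hG.prod
  have htG : ∑' n : ℤ, (∑' q : ℕ, F (intNatEquiv (n, q))) = Complex.exp ((Real.cos θ * ξ : ℝ) : ℂ) := by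
    rw [← Summable.tsum_prod hG, intNatEquiv.tsum_eq F, htF]
  -- summability of the pieces
  have hcnat : Summable (fun k : ℕ => ∑' q : ℕ, F (intNatEquiv ((k:ℤ), q))) :=
    hc.comp_injective (fun a b h => by exact_mod_cast h)
  have hcneg : Summable (fun k : ℕ => ∑' q : ℕ, F (intNatEquiv (-((k:ℤ)+1), q))) :=
    hc.comp_injective (fun a b h => by omega)
  have hgp : Summable (fun k : ℕ => ((besselI (k : ℝ) ξ : ℝ) : ℂ) * z ^ k) :=
    hcnat.congr hfibPos
  have hgn : Summable (fun k : ℕ => ((besselI ((k+1:ℕ) : ℝ) ξ : ℝ) : ℂ) * w ^ (k+1)) :=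
    hcneg.congr hfibNeg
  have hgp1 : Summable (fun k : ℕ => ((besselI ((k+1:ℕ) : ℝ) ξ : ℝ) : ℂ) * z ^ (k+1)) := by
    have := (summable_nat_add_iff 1).mpr hgp
    exact this.congr fun k => by norm_num
  -- norms of z, w powers
  have hznorm : ∀ k : ℕ, ‖z ^ k‖ = 1 := by
    intro k
    rw [norm_pow, Complex.norm_exp_ofReal_mul_I, one_pow]
  -- summability of besselI sequence
  have hIsummable : Summable (fun n : ℕ => besselI ((n+1 : ℕ) : ℝ) ξ) := by
    have h1 : Summable (fun k : ℕ => ‖((besselI ((k+1:ℕ) : ℝ) ξ : ℝ) : ℂ) * z ^ (k+1)‖) :=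
      hgp1.norm
    refine h1.congr fun k => ?_
    rw [norm_mul, hznorm (k+1), mul_one, Complex.norm_real, Real.norm_eq_abs,
      abs_of_nonneg (besselI_nat_nonneg (k+1) ξ hξ.le)]
  refine ⟨hIsummable, ?_⟩
  -- assemble the identity
  have split := tsum_of_nat_of_neg_add_one
    (f := fun n : ℤ => ∑' q : ℕ, F (intNatEquiv (n, q))) hcnat hcneg
  rw [split, Summable.tsum_eq_zero_add hcnat] at htG
  have h00 : (∑' q : ℕ, F (intNatEquiv (((0:ℕ) : ℤ), q))) = ((besselI (0 : ℝ) ξ : ℝ) : ℂ) := by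
    rw [hfibPos 0]
    norm_num
  rw [h00] at htG
  have hplus : (∑' n : ℕ, ∑' q : ℕ, F (intNatEquiv (((n+1 : ℕ) : ℤ), q)))
      = ∑' n : ℕ, ((besselI ((n+1:ℕ) : ℝ) ξ : ℝ) : ℂ) * z ^ (n+1) :=
    tsum_congr fun n => hfibPos (n+1)
  have hminus : (∑' n : ℕ, ∑' q : ℕ, F (intNatEquiv (-((n:ℤ)+1), q)))
      = ∑' n : ℕ, ((besselI ((n+1:ℕ) : ℝ) ξ : ℝ) : ℂ) * w ^ (n+1) :=
    tsum_congr fun n => hfibNeg n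
  rw [hplus, hminus] at htG
  -- combine the two tails
  have hcomb : ∑' n : ℕ, ((besselI ((n+1:ℕ) : ℝ) ξ : ℝ) : ℂ) * z ^ (n+1)
      + ∑' n : ℕ, ((besselI ((n+1:ℕ) : ℝ) ξ : ℝ) : ℂ) * w ^ (n+1)
      = ∑' n : ℕ, (((2 * Real.cos (((n:ℝ)+1) * θ) * besselI ((n+1:ℕ) : ℝ) ξ : ℝ)) : ℂ) := by
    rw [← Summable.tsum_add hgp1 hgn]
    refine tsum_congr fun n => ?_
    have hz1 : z ^ (n+1) = Complex.exp (((n:ℂ)+1) * ((θ:ℂ) * Complex.I)) := by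
      rw [← Complex.exp_nat_mul]
      push_cast
      ring_nf
    have hw1 : w ^ (n+1) = Complex.exp (-(((n:ℂ)+1) * ((θ:ℂ) * Complex.I))) := by
      rw [← Complex.exp_nat_mul]
      push_cast
      ring_nf
    have hcosn : ((Real.cos (((n:ℝ)+1) * θ) : ℝ) : ℂ) = Complex.cos ((((n:ℝ)+1) * θ : ℝ) : ℂ) :=
      Complex.ofReal_cos _
    rw [← mul_add, hz1, hw1, Complex.ofReal_mul, Complex.ofReal_mul, hcosn, Complex.cos]
    push_cast
    ring_nf
  rw [add_assoc, hcomb] at htG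
  -- take real parts
  have hfinal : ((Real.exp (Real.cos θ * ξ) : ℝ) : ℂ)
      = ((besselI 0 ξ + ∑' n : ℕ, 2 * Real.cos (((n:ℝ)+1) * θ) * besselI ((n+1:ℕ) : ℝ) ξ : ℝ) : ℂ) := by
    rw [Complex.ofReal_exp, ← htG, Complex.ofReal_add, Complex.ofReal_tsum]
  exact_mod_cast hfinal


/-- For every real `α` with `|α| ≤ 1` and every real `ξ > 0`, the series
`∑_{n=1}^∞ n C_n^0(α) I_n(ξ)` converges absolutely and
`e^(αξ) = I_0(ξ) + ∑_{n=1}^∞ n C_n^0(α) I_n(ξ)`. -/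
theorem exp_eq_besselI_series (α : ℝ) (hα : |α| ≤ 1) (ξ : ℝ) (hξ : 0 < ξ) :
    Summable (fun n : ℕ => |((n + 1 : ℕ) : ℝ) * gegenbauerC0 (n + 1) α *
      besselI ((n + 1 : ℕ) : ℝ) ξ|) ∧
    Real.exp (α * ξ) = besselI 0 ξ +
      ∑' n : ℕ, ((n + 1 : ℕ) : ℝ) * gegenbauerC0 (n + 1) α * besselI ((n + 1 : ℕ) : ℝ) ξ := by
  obtain ⟨h1, h2⟩ := abs_le.mp hα
  set θ := Real.arccos α with hθ
  have hcos : Real.cos θ = α := Real.cos_arccos h1 h2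
  obtain ⟨hsum, heq⟩ := exp_cos_eq ξ θ hξ
  have hterm : ∀ n : ℕ, ((n + 1 : ℕ) : ℝ) * gegenbauerC0 (n + 1) α * besselI ((n + 1 : ℕ) : ℝ) ξ
      = 2 * Real.cos (((n:ℝ)+1) * θ) * besselI ((n + 1 : ℕ) : ℝ) ξ := by
    intro n
    rw [← hcos, mul_gegenbauerC0_eq_tcheb, tcheb_cos n θ]
  have hnn : ∀ n : ℕ, 0 ≤ besselI ((n + 1 : ℕ) : ℝ) ξ := fun n =>
    besselI_nat_nonneg (n+1) ξ hξ.le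
  constructor
  · refine Summable.of_nonneg_of_le (fun n => abs_nonneg _) (fun n => ?_) (hsum.mul_left 2)
    rw [hterm n, abs_mul, abs_of_nonneg (hnn n)]
    have hb : |2 * Real.cos (((n:ℝ)+1) * θ)| ≤ 2 := by
      rw [abs_mul]
      have := Real.abs_cos_le_one (((n:ℝ)+1) * θ)
      calc |(2:ℝ)| * |Real.cos (((n:ℝ)+1) * θ)| ≤ 2 * 1 := by
            rw [abs_of_nonneg (by norm_num : (0:ℝ) ≤ 2)]
            exact mul_le_mul_of_nonneg_left this (by norm_num)
        _ = 2 := by norm_num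
    exact mul_le_mul_of_nonneg_right hb (hnn n)
  · calc Real.exp (α * ξ) = Real.exp (Real.cos θ * ξ) := by rw [hcos]
      _ = besselI 0 ξ + ∑' n : ℕ, 2 * Real.cos (((n:ℝ)+1) * θ) * besselI ((n+1 : ℕ) : ℝ) ξ := heq
      _ = besselI 0 ξ + ∑' n : ℕ, ((n + 1 : ℕ) : ℝ) * gegenbauerC0 (n + 1) α *
            besselI ((n + 1 : ℕ) : ℝ) ξ := by
        rw [tsum_congr hterm]
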